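/- In the generalized linear model (z ∼ N(0,I_k), x = Wz, P(y=+1|z) = f(zᵀβ) with f increasing), the boundary risk of the Bayes-optimal classifier under ℓ₂ perturbations of radius ε satisfies BR(h*) ≤ 2ε‖W(WᵀW)^{-1}β‖₂ / (√(2π)‖β‖₂) ≤ 2ε/(√(2π)σ_min(W)). -/

import Mathlib

open MeasureTheory ProbabilityTheory Matrix
open scoped NNReal ENNReal

/-- Euclidean norm on ℝ^n. -/
noncomputable def l2Norm {n : ℕ} (u : Fin n → ℝ) : ℝ := Real.sqrt (∑ i, u i ^ 2)

section Aux
open Real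

lemma aux_gauss_pdf_conv (v₁ v₂ : ℝ≥0) (h1 : v₁ ≠ 0) (h2 : v₂ ≠ 0) (t : ℝ) :
    ∫ x : ℝ, gaussianPDFReal 0 v₁ x * gaussianPDFReal 0 v₂ (t - x) =
      gaussianPDFReal 0 (v₁ + v₂) t := by
  have hv1 : (0:ℝ) < v₁ := lt_of_le_of_ne v₁.coe_nonneg (by exact_mod_cast (Ne.symm h1))
  have hv2 : (0:ℝ) < v₂ := lt_of_le_of_ne v₂.coe_nonneg (by exact_mod_cast (Ne.symm h2))
  have hv12 : (0:ℝ) < (v₁:ℝ) + v₂ := by linarith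
  set a : ℝ := ((v₁:ℝ) + v₂) / (2 * v₁ * v₂) with ha
  have hapos : 0 < a := by positivity
  set m : ℝ := (v₁:ℝ) * t / ((v₁:ℝ) + v₂) with hm
  have key : ∀ x : ℝ, gaussianPDFReal 0 v₁ x * gaussianPDFReal 0 v₂ (t - x) =
      gaussianPDFReal 0 (v₁ + v₂) t * ((Real.sqrt (π / a))⁻¹ * Real.exp (-a * (x - m)^2)) := by
    intro x
    simp only [gaussianPDFReal, sub_zero]
    have hpi : (0:ℝ) < π := Real.pi_pos
    have hconst : Real.sqrt (2 * π * v₁) * Real.sqrt (2 * π * v₂)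
        = Real.sqrt (2 * π * ((v₁:ℝ) + v₂)) * Real.sqrt (π / a) := by
      rw [← Real.sqrt_mul (by positivity), ← Real.sqrt_mul (by positivity)]
      congr 1
      rw [ha]
      field_simp
    have hexp : Real.exp (-x ^ 2 / (2 * v₁)) * Real.exp (-(t - x) ^ 2 / (2 * v₂))
        = Real.exp (-t ^ 2 / (2 * ((v₁:ℝ) + v₂))) * Real.exp (-a * (x - m) ^ 2) := by
      rw [← Real.exp_add, ← Real.exp_add]
      congr 1
      rw [ha, hm]
      field_simp
      ring
    push_cast
    calc (Real.sqrt (2 * π * v₁))⁻¹ * Real.exp (-x ^ 2 / (2 * v₁)) *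
          ((Real.sqrt (2 * π * v₂))⁻¹ * Real.exp (-(t - x) ^ 2 / (2 * v₂)))
        = (Real.sqrt (2 * π * v₁) * Real.sqrt (2 * π * v₂))⁻¹ *
          (Real.exp (-x ^ 2 / (2 * v₁)) * Real.exp (-(t - x) ^ 2 / (2 * v₂))) := by
          rw [mul_inv]; ring
      _ = (Real.sqrt (2 * π * ((v₁:ℝ) + v₂)) * Real.sqrt (π / a))⁻¹ *
          (Real.exp (-t ^ 2 / (2 * ((v₁:ℝ) + v₂))) * Real.exp (-a * (x - m) ^ 2)) := by
          rw [hconst, hexp]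
      _ = _ := by rw [mul_inv]; ring
  simp_rw [key]
  rw [integral_const_mul, integral_const_mul]
  have : ∫ x : ℝ, Real.exp (-a * (x - m)^2) = Real.sqrt (π / a) := by
    rw [MeasureTheory.integral_sub_right_eq_self (fun x : ℝ => Real.exp (-a * x^2)) m]
    exact integral_gaussian a
  rw [this, inv_mul_cancel₀ (by positivity), mul_one]

lemma aux_gaussianPDFReal_le (μ : ℝ) (v : ℝ≥0) (x : ℝ) :
    gaussianPDFReal μ v x ≤ (Real.sqrt (2 * π * v))⁻¹ := by
  rw [gaussianPDFReal]
  have h1 : Real.exp (-(x - μ)^2 / (2 * v)) ≤ 1 := by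
    rw [Real.exp_le_one_iff]
    rcases eq_or_ne v 0 with h | h
    · simp [h]
    · have : (0:ℝ) < v := lt_of_le_of_ne v.coe_nonneg (by exact_mod_cast (Ne.symm h))
      apply div_nonpos_of_nonpos_of_nonneg (neg_nonpos_of_nonneg (sq_nonneg _)) (by positivity)
  calc _ ≤ (Real.sqrt (2 * π * v))⁻¹ * 1 :=
        mul_le_mul_of_nonneg_left h1 (by positivity)
    _ = _ := mul_one _

lemma aux_pdf_meas2 (v : ℝ≥0) : Measurable (fun p : ℝ × ℝ => gaussianPDFReal p.1 v p.2) := by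
  simp only [gaussianPDFReal]
  fun_prop

lemma aux_gauss_conv (v₁ v₂ : ℝ≥0) :
    Measure.map (fun p : ℝ × ℝ => p.1 + p.2)
        ((gaussianReal 0 v₁).prod (gaussianReal 0 v₂)) = gaussianReal 0 (v₁ + v₂) := by
  rcases eq_or_ne v₁ 0 with h1 | h1
  · rw [h1, gaussianReal_zero_var, Measure.dirac_prod,
      Measure.map_map (by fun_prop) (by fun_prop)]
    simp only [Function.comp_def, zero_add]
    simp [Measure.map_id]
  rcases eq_or_ne v₂ 0 with h2 | h2
  · rw [h2, gaussianReal_zero_var, Measure.prod_dirac,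
      Measure.map_map (by fun_prop) (by fun_prop)]
    simp only [Function.comp_def, add_zero]
    simp [Measure.map_id]
  have h12 : v₁ + v₂ ≠ 0 := by simp [h1]
  have hadd : Measurable (fun p : ℝ × ℝ => p.1 + p.2) := by fun_prop
  ext s hs
  rw [Measure.map_apply hadd hs, Measure.prod_apply (hadd hs)]
  have hfib : ∀ x : ℝ, (Prod.mk x ⁻¹' ((fun p : ℝ × ℝ => p.1 + p.2) ⁻¹' s))
      = (fun y => x + y) ⁻¹' s := fun x => rfl
  have hmapx : ∀ x : ℝ, gaussianReal 0 v₂ ((fun y => x + y) ⁻¹' s)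
      = ∫⁻ u in s, ENNReal.ofReal (gaussianPDFReal x v₂ u) := by
    intro x
    have : gaussianReal 0 v₂ ((fun y => x + y) ⁻¹' s)
        = ((gaussianReal 0 v₂).map (fun y => x + y)) s := by
      rw [Measure.map_apply (by fun_prop) hs]
    rw [this, gaussianReal_map_const_add, zero_add, gaussianReal_apply _ h2]
    rfl
  simp_rw [hfib, hmapx]
  rw [gaussianReal_of_var_ne_zero _ h1,
    lintegral_withDensity_eq_lintegral_mul _ (measurable_gaussianPDF 0 v₁)
      (Measurable.lintegral_prod_right'
        (f := fun p : ℝ × ℝ => ENNReal.ofReal (gaussianPDFReal p.1 v₂ p.2))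
        ((aux_pdf_meas2 v₂).ennreal_ofReal))]
  have hswap : ∫⁻ x, gaussianPDF 0 v₁ x * ∫⁻ u in s, ENNReal.ofReal (gaussianPDFReal x v₂ u)
      = ∫⁻ u in s, ∫⁻ x, gaussianPDF 0 v₁ x * ENNReal.ofReal (gaussianPDFReal x v₂ u) := by
    have hst : ∀ x : ℝ, gaussianPDF 0 v₁ x * ∫⁻ u in s, ENNReal.ofReal (gaussianPDFReal x v₂ u)
        = ∫⁻ u in s, gaussianPDF 0 v₁ x * ENNReal.ofReal (gaussianPDFReal x v₂ u) := by
      intro x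
      exact (lintegral_const_mul _
        (((aux_pdf_meas2 v₂).comp measurable_prodMk_left).ennreal_ofReal)).symm
    simp_rw [hst]
    exact lintegral_lintegral_swap
      (((measurable_gaussianPDF 0 v₁).comp measurable_fst).mul
        ((aux_pdf_meas2 v₂).ennreal_ofReal)).aemeasurable
  simp only [Pi.mul_apply] at hswap ⊢
  rw [hswap, gaussianReal_apply _ h12]
  apply lintegral_congr
  intro u
  have hpt : ∀ x : ℝ, gaussianPDF 0 v₁ x * ENNReal.ofReal (gaussianPDFReal x v₂ u)
      = ENNReal.ofReal (gaussianPDFReal 0 v₁ x * gaussianPDFReal 0 v₂ (u - x)) := by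
    intro x
    rw [gaussianPDF, ← ENNReal.ofReal_mul (gaussianPDFReal_nonneg _ _ _),
      gaussianPDFReal_sub, zero_add]
  simp_rw [hpt]
  rw [← ofReal_integral_eq_lintegral_ofReal]
  · rw [aux_gauss_pdf_conv v₁ v₂ h1 h2 u]; rfl
  · have : Integrable (fun x : ℝ => gaussianPDFReal 0 v₂ (u - x) * gaussianPDFReal 0 v₁ x) := by
      apply (integrable_gaussianPDFReal 0 v₁).bdd_mul (c := (Real.sqrt (2 * π * v₂))⁻¹)
      · exact ((measurable_gaussianPDFReal 0 v₂).comp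
          (measurable_const.sub measurable_id)).aestronglyMeasurable
      · exact Filter.Eventually.of_forall fun x => by
          rw [Real.norm_eq_abs, abs_of_nonneg (gaussianPDFReal_nonneg _ _ _)]
          exact aux_gaussianPDFReal_le _ _ _
    exact this.congr (by filter_upwards with x using mul_comm _ _)
  · filter_upwards with x
    exact mul_nonneg (gaussianPDFReal_nonneg _ _ _) (gaussianPDFReal_nonneg _ _ _)

lemma aux_measurable_dotProduct {k : ℕ} (β : Fin k → ℝ) :
    Measurable (fun z : Fin k → ℝ => β ⬝ᵥ z) := by
  unfold dotProduct
  exact Finset.measurable_sum _ fun i _ => (measurable_pi_apply i).const_mul _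

lemma aux_gauss_dot {k : ℕ} (β : Fin k → ℝ) :
    Measure.map (fun z : Fin k → ℝ => β ⬝ᵥ z) (Measure.pi fun _ => gaussianReal 0 1)
      = gaussianReal 0 ⟨∑ i, β i ^ 2, Finset.sum_nonneg fun i _ => sq_nonneg _⟩ := by
  induction k with
  | zero =>
    have h0 : (fun z : Fin 0 → ℝ => β ⬝ᵥ z) = fun _ => (0:ℝ) := by
      funext z; simp [dotProduct]
    rw [h0]
    have : (⟨∑ i : Fin 0, β i ^ 2, Finset.sum_nonneg fun i _ => sq_nonneg _⟩ : ℝ≥0) = 0 := by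
      ext; simp
    erw [this, gaussianReal_zero_var, Measure.map_const]
    simp
  | succ k ih =>
    set e := MeasurableEquiv.piFinSuccAbove (fun _ : Fin (k+1) => ℝ) 0 with he
    have hmp := measurePreserving_piFinSuccAbove (fun _ : Fin (k+1) => gaussianReal 0 1) 0
    set g : ℝ × (Fin k → ℝ) → ℝ :=
      fun p => β 0 * p.1 + (fun j => β j.succ) ⬝ᵥ p.2 with hg
    have hcomp : (fun z : Fin (k+1) → ℝ => β ⬝ᵥ z) = g ∘ e := by
      funext z
      simp only [Function.comp_apply, hg, he, MeasurableEquiv.piFinSuccAbove,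
        MeasurableEquiv.coe_mk, Fin.insertNthEquiv]
      rw [dotProduct, Fin.sum_univ_succ]
      simp [dotProduct, Fin.removeNth, Fin.succAbove, Fin.tail]
    have hgm : Measurable g := by
      apply Measurable.add
      · exact measurable_fst.const_mul _
      · exact (aux_measurable_dotProduct _).comp measurable_snd
    rw [hcomp, ← Measure.map_map hgm e.measurable, hmp.map_eq]
    have hprod : Measure.map g
        ((gaussianReal 0 1).prod (Measure.pi fun _ : Fin k => gaussianReal 0 1))
        = Measure.map (fun p : ℝ × ℝ => p.1 + p.2)
          (((gaussianReal 0 1).map (fun x => β 0 * x)).prod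
            ((Measure.pi fun _ : Fin k => gaussianReal 0 1).map
              (fun w => (fun j => β j.succ) ⬝ᵥ w))) := by
      rw [Measure.map_prod_map _ _ (measurable_const_mul _) (aux_measurable_dotProduct _),
        Measure.map_map (by fun_prop) ((measurable_const_mul _).prodMap (aux_measurable_dotProduct _))]
      rfl
    rw [hprod, gaussianReal_map_const_mul, ih]
    simp only [mul_zero, mul_one]
    erw [aux_gauss_conv]
    congr 1
    ext
    push_cast
    exact (Fin.sum_univ_succ (fun i => β i ^ 2)).symm

lemma aux_gauss_interval (v : ℝ≥0) (hv : v ≠ 0) (c δ : ℝ) :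
    gaussianReal 0 v {x | |x - c| ≤ δ} ≤ ENNReal.ofReal (2 * δ / Real.sqrt (2 * π * v)) := by
  have hset : {x : ℝ | |x - c| ≤ δ} = Set.Icc (c - δ) (c + δ) := by
    ext x; simp only [Set.mem_setOf_eq, abs_sub_le_iff, Set.mem_Icc]
    constructor <;> intro h <;> constructor <;> linarith [h.1, h.2]
  rw [hset, gaussianReal_apply _ hv]
  calc ∫⁻ x in Set.Icc (c - δ) (c + δ), gaussianPDF 0 v x
      ≤ ∫⁻ _ in Set.Icc (c - δ) (c + δ), ENNReal.ofReal ((Real.sqrt (2 * π * v))⁻¹) := by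
        apply setLIntegral_mono measurable_const
        intro x _
        exact ENNReal.ofReal_le_ofReal (aux_gaussianPDFReal_le _ _ _)
    _ = ENNReal.ofReal ((Real.sqrt (2 * π * v))⁻¹) * volume (Set.Icc (c - δ) (c + δ)) := by
        rw [setLIntegral_const]
    _ ≤ ENNReal.ofReal (2 * δ / Real.sqrt (2 * π * v)) := by
        rw [Real.volume_Icc, show c + δ - (c - δ) = 2 * δ by ring,
          ← ENNReal.ofReal_mul (by positivity)]
        apply ENNReal.ofReal_le_ofReal
        rw [div_eq_mul_inv]; ring_nf; exact le_rfl

lemma aux_l2Norm_nonneg {n : ℕ} (u : Fin n → ℝ) : 0 ≤ l2Norm u := Real.sqrt_nonneg _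

lemma aux_l2Norm_sq {n : ℕ} (u : Fin n → ℝ) : l2Norm u ^ 2 = ∑ i, u i ^ 2 :=
  Real.sq_sqrt (Finset.sum_nonneg fun _ _ => sq_nonneg _)

lemma aux_l2Norm_pos {n : ℕ} {u : Fin n → ℝ} (hu : u ≠ 0) : 0 < l2Norm u := by
  rcases lt_or_eq_of_le (aux_l2Norm_nonneg u) with h | h
  · exact h
  exfalso
  apply hu
  have h2 : ∑ i, u i ^ 2 = 0 := by
    have := aux_l2Norm_sq u
    rw [← this, ← h]; ring
  funext i
  have := (Finset.sum_eq_zero_iff_of_nonneg (fun i _ => sq_nonneg (u i))).mp h2 i (Finset.mem_univ i)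
  exact pow_eq_zero_iff (n := 2) (by norm_num) |>.mp this

lemma aux_abs_dot_le {n : ℕ} (a b : Fin n → ℝ) : |a ⬝ᵥ b| ≤ l2Norm a * l2Norm b := by
  have h := Finset.sum_mul_sq_le_sq_mul_sq Finset.univ a b
  have habs : |a ⬝ᵥ b| = Real.sqrt ((a ⬝ᵥ b) ^ 2) := (Real.sqrt_sq_eq_abs _).symm
  rw [habs, l2Norm, l2Norm, ← Real.sqrt_mul (Finset.sum_nonneg fun _ _ => sq_nonneg _)]
  exact Real.sqrt_le_sqrt h

lemma aux_dot_le {n : ℕ} (a b : Fin n → ℝ) : a ⬝ᵥ b ≤ l2Norm a * l2Norm b :=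
  (le_abs_self _).trans (aux_abs_dot_le a b)

lemma aux_key_norm_ineq {d k : ℕ} (W : Matrix (Fin d) (Fin k) ℝ) [Invertible (Wᵀ * W)]
    (β : Fin k → ℝ) (σmin : ℝ) (hσ : 0 < σmin)
    (hσW : ∀ u : Fin k → ℝ, σmin * l2Norm u ≤ l2Norm (W.mulVec u)) :
    σmin * l2Norm ((W * ⅟(Wᵀ * W)).mulVec β) ≤ l2Norm β := by
  set u : Fin k → ℝ := (⅟(Wᵀ * W)).mulVec β with hu
  set a : Fin d → ℝ := (W * ⅟(Wᵀ * W)).mulVec β with ha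
  have haW : a = W.mulVec u := by rw [ha, hu, Matrix.mulVec_mulVec]
  have hWu : (Wᵀ * W).mulVec u = β := by
    rw [hu, Matrix.mulVec_mulVec, mul_invOf_self, Matrix.one_mulVec]
  have hsq : l2Norm a ^ 2 = u ⬝ᵥ β := by
    rw [aux_l2Norm_sq]
    have h' : ∑ i, a i ^ 2 = a ⬝ᵥ a := by simp [dotProduct, sq]
    rw [h', haW, Matrix.dotProduct_mulVec, ← Matrix.mulVec_transpose,
      Matrix.mulVec_mulVec, hWu, dotProduct_comm]
  have h1 : l2Norm a ^ 2 ≤ l2Norm u * l2Norm β := hsq ▸ aux_dot_le u β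
  have h2 : σmin * l2Norm u ≤ l2Norm a := haW ▸ hσW u
  rcases eq_or_lt_of_le (aux_l2Norm_nonneg a) with h0 | h0
  · rw [← h0, mul_zero]; exact aux_l2Norm_nonneg β
  · have h3 : l2Norm u ≤ l2Norm a / σmin := by
      rw [le_div_iff₀ hσ]; linarith [h2]
    have h4 : l2Norm a ^ 2 ≤ (l2Norm a / σmin) * l2Norm β :=
      h1.trans (mul_le_mul_of_nonneg_right h3 (aux_l2Norm_nonneg β))
    rw [div_mul_eq_mul_div, le_div_iff₀ hσ, sq] at h4
    nlinarith [h4]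

lemma aux_measurable_mulVec {d k : ℕ} (W : Matrix (Fin d) (Fin k) ℝ) :
    Measurable (fun z : Fin k → ℝ => W.mulVec z) := by
  apply measurable_pi_lambda
  intro i
  unfold Matrix.mulVec dotProduct
  exact Finset.measurable_sum _ fun j _ => (measurable_pi_apply j).const_mul _

end Aux

/-- Generalized linear model with latent structure: `z ∼ N(0, I_k)`, `x = Wz`,
`P(y = 1 | z) = f(zᵀβ)`. The boundary risk (for ℓ₂ perturbations of radius `ε`)
of the Bayes-optimal classifier satisfies
`BR(h*) ≤ 2ε‖W(WᵀW)⁻¹β‖/(√(2π)‖β‖) ≤ 2ε/(√(2π)σ_min(W))`. -/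
theorem glm_boundary_risk_bound {d k : ℕ} (W : Matrix (Fin d) (Fin k) ℝ)
    [Invertible (Wᵀ * W)]
    (β : Fin k → ℝ) (hβ : β ≠ 0)
    (f : ℝ → ℝ) (hfmono : StrictMono f) (hfmeas : Measurable f)
    (hf01 : ∀ t, f t ∈ Set.Icc (0:ℝ) 1) (c₀ : ℝ) (hc₀ : f c₀ = 1/2)
    (σmin : ℝ) (hσ : 0 < σmin)
    (hσW : ∀ u : Fin k → ℝ, σmin * l2Norm u ≤ l2Norm (W.mulVec u))
    (ε : ℝ) (hε : 0 ≤ ε)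
    (P : Measure ((Fin d → ℝ) × ℝ))
    (hP : P = (((Measure.pi fun _ : Fin k => gaussianReal 0 1).withDensity
          (fun z => ENNReal.ofReal (f (z ⬝ᵥ β)))).map
            (fun z => (W.mulVec z, (1:ℝ)))) +
      (((Measure.pi fun _ : Fin k => gaussianReal 0 1).withDensity
          (fun z => ENNReal.ofReal (1 - f (z ⬝ᵥ β)))).map
            (fun z => (W.mulVec z, (-1:ℝ)))))
    (hstar : (Fin d → ℝ) → ℝ)
    (hhstar : hstar = fun x =>
      if 0 ≤ f (β ⬝ᵥ (⅟(Wᵀ * W) * Wᵀ).mulVec x) - 1/2 then 1 else -1) :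
    P {p | ∃ x', l2Norm (x' - p.1) ≤ ε ∧ hstar x' * p.2 ≤ 0} -
        P {p | hstar p.1 * p.2 ≤ 0} ≤
      ENNReal.ofReal (2 * ε * l2Norm ((W * ⅟(Wᵀ * W)).mulVec β) /
        (Real.sqrt (2 * Real.pi) * l2Norm β)) ∧
    2 * ε * l2Norm ((W * ⅟(Wᵀ * W)).mulVec β) /
        (Real.sqrt (2 * Real.pi) * l2Norm β) ≤
      2 * ε / (Real.sqrt (2 * Real.pi) * σmin) := by
  have hLβ : 0 < l2Norm β := aux_l2Norm_pos hβ
  set a : Fin d → ℝ := (W * ⅟(Wᵀ * W)).mulVec β with ha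
  have hLa : 0 ≤ l2Norm a := aux_l2Norm_nonneg a
  have hsqrt2pi : 0 < Real.sqrt (2 * Real.pi) := Real.sqrt_pos.mpr (by positivity)
  constructor
  swap
  · -- second inequality
    have hkey := aux_key_norm_ineq W β σmin hσ hσW
    rw [div_le_div_iff₀ (by positivity) (by positivity)]
    have h5 := mul_le_mul_of_nonneg_left hkey
      (mul_nonneg (mul_nonneg (by norm_num : (0:ℝ) ≤ 2) hε) hsqrt2pi.le)
    linear_combination h5
  -- first inequality
  subst hP hhstar
  set γ : Measure (Fin k → ℝ) := Measure.pi fun _ : Fin k => gaussianReal 0 1 with hγ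
  set δ : ℝ := ε * l2Norm a with hδ
  have hδ0 : 0 ≤ δ := mul_nonneg hε hLa
  -- the matrix identities
  have hMT : (⅟(Wᵀ * W))ᵀ = ⅟(Wᵀ * W) := by
    rw [invOf_eq_nonsing_inv, Matrix.transpose_nonsing_inv, Matrix.transpose_mul,
      Matrix.transpose_transpose]
  have haeq : ∀ x, β ⬝ᵥ (⅟(Wᵀ * W) * Wᵀ).mulVec x = a ⬝ᵥ x := by
    intro x
    rw [Matrix.dotProduct_mulVec]
    congr 1
    have h1 : (⅟(Wᵀ * W) * Wᵀ)ᵀ = W * ⅟(Wᵀ * W) := by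
      rw [Matrix.transpose_mul, Matrix.transpose_transpose, hMT]
    rw [ha, ← h1, Matrix.mulVec_transpose]
  have hWz : ∀ z, a ⬝ᵥ W.mulVec z = β ⬝ᵥ z := by
    intro z
    rw [Matrix.dotProduct_mulVec]
    congr 1
    rw [← Matrix.mulVec_transpose, ha, Matrix.mulVec_mulVec, ← Matrix.mul_assoc,
      mul_invOf_self, Matrix.one_mulVec]
  -- sets
  set A : Set ((Fin d → ℝ) × ℝ) := {p | ∃ x', l2Norm (x' - p.1) ≤ ε ∧
    (if 0 ≤ f (β ⬝ᵥ (⅟(Wᵀ * W) * Wᵀ).mulVec x') - 1/2 then (1:ℝ) else -1) * p.2 ≤ 0} with hA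
  set B : Set ((Fin d → ℝ) × ℝ) := {p | (if 0 ≤ f (β ⬝ᵥ (⅟(Wᵀ * W) * Wᵀ).mulVec p.1) - 1/2
    then (1:ℝ) else -1) * p.2 ≤ 0} with hB
  set C : Set ((Fin d → ℝ) × ℝ) := {p | |a ⬝ᵥ p.1 - c₀| ≤ δ} with hC
  have hCm : MeasurableSet C := by
    have : C = (fun p : (Fin d → ℝ) × ℝ => |a ⬝ᵥ p.1 - c₀|) ⁻¹' Set.Iic δ := rfl
    rw [this]
    exact ((((aux_measurable_dotProduct a).comp measurable_fst).sub measurable_const).abs)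
      measurableSet_Iic
  -- inclusion A \ B ⊆ C
  have hsub : A \ B ⊆ C := by
    rintro ⟨x, y⟩ ⟨hmem, hnb⟩
    obtain ⟨x', hd, hx'⟩ := hmem
    simp only [hB, Set.mem_setOf_eq, not_le] at hnb
    have hbound : ∀ u w : Fin d → ℝ, l2Norm (u - w) ≤ ε → a ⬝ᵥ u - a ⬝ᵥ w ≤ δ := by
      intro u w huw
      have h1 : a ⬝ᵥ u - a ⬝ᵥ w = a ⬝ᵥ (u - w) := (dotProduct_sub a u w).symm
      have h2 : a ⬝ᵥ (u - w) ≤ l2Norm a * l2Norm (u - w) := aux_dot_le _ _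
      have h3 : l2Norm a * l2Norm (u - w) ≤ l2Norm a * ε :=
        mul_le_mul_of_nonneg_left huw hLa
      rw [hδ]; linarith
    have hd' : l2Norm (x - x') ≤ ε := by
      have : l2Norm (x - x') = l2Norm (x' - x) := by
        unfold l2Norm
        congr 1
        apply Finset.sum_congr rfl
        intro i _
        simp only [Pi.sub_apply]
        ring
      rw [this]; exact hd
    by_cases h1 : 0 ≤ f (β ⬝ᵥ (⅟(Wᵀ * W) * Wᵀ).mulVec x) - 1/2 <;>
      by_cases h2 : 0 ≤ f (β ⬝ᵥ (⅟(Wᵀ * W) * Wᵀ).mulVec x') - 1/2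
    · rw [if_pos h1] at hnb
      rw [if_pos h2] at hx'
      linarith
    · -- x on the ≥ side, x' on the < side
      rw [haeq] at h1 h2
      have hax : c₀ ≤ a ⬝ᵥ x := by
        by_contra hcon
        push_neg at hcon
        have := hfmono hcon
        rw [hc₀] at this
        linarith
      have hax' : a ⬝ᵥ x' < c₀ := by
        by_contra hcon
        push_neg at hcon
        have := hfmono.le_iff_le.mpr hcon
        rw [hc₀] at this
        push_neg at h2
        linarith
      have := hbound x x' hd'
      simp only [hC, Set.mem_setOf_eq]
      rw [abs_le]
      constructor <;> linarith
    · -- x on the < side, x' on the ≥ side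
      rw [haeq] at h1 h2
      have hax : a ⬝ᵥ x < c₀ := by
        by_contra hcon
        push_neg at hcon
        have := hfmono.le_iff_le.mpr hcon
        rw [hc₀] at this
        push_neg at h1
        linarith
      have hax' : c₀ ≤ a ⬝ᵥ x' := by
        by_contra hcon
        push_neg at hcon
        have := hfmono hcon
        rw [hc₀] at this
        linarith
      have hbd : a ⬝ᵥ x' - a ⬝ᵥ x ≤ δ := by
        apply hbound
        exact hd
      simp only [hC, Set.mem_setOf_eq]
      rw [abs_le]
      constructor <;> linarith
    · rw [if_neg h1] at hnb
      rw [if_neg h2] at hx'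
      nlinarith
  -- computing / bounding the measure of C
  set v : ℝ≥0 := ⟨∑ i, β i ^ 2, Finset.sum_nonneg fun _ _ => sq_nonneg _⟩ with hv
  have hsum : 0 < ∑ i, β i ^ 2 := by
    rw [← aux_l2Norm_sq]
    exact pow_pos hLβ 2
  have hvne : v ≠ 0 := by
    intro h
    apply hsum.ne'
    have := congrArg NNReal.toReal h
    exact this
  set S : Set (Fin k → ℝ) := (fun z => β ⬝ᵥ z) ⁻¹' {t | |t - c₀| ≤ δ} with hS
  have hTm : MeasurableSet {t : ℝ | |t - c₀| ≤ δ} := by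
    have : {t : ℝ | |t - c₀| ≤ δ} = (fun t : ℝ => |t - c₀|) ⁻¹' Set.Iic δ := rfl
    rw [this]
    exact ((measurable_id.sub measurable_const).abs) measurableSet_Iic
  have hSm : MeasurableSet S := (aux_measurable_dotProduct β) hTm
  have hmap1 : Measurable (fun z : Fin k → ℝ => (W.mulVec z, (1:ℝ))) :=
    (aux_measurable_mulVec W).prodMk measurable_const
  have hmap2 : Measurable (fun z : Fin k → ℝ => (W.mulVec z, (-1:ℝ))) :=
    (aux_measurable_mulVec W).prodMk measurable_const
  have hpre1 : (fun z : Fin k → ℝ => (W.mulVec z, (1:ℝ))) ⁻¹' C = S := by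
    ext z
    simp only [hC, hS, Set.mem_preimage, Set.mem_setOf_eq, hWz z]
  have hpre2 : (fun z : Fin k → ℝ => (W.mulVec z, (-1:ℝ))) ⁻¹' C = S := by
    ext z
    simp only [hC, hS, Set.mem_preimage, Set.mem_setOf_eq, hWz z]
  have hm1 : Measurable fun z : Fin k → ℝ => ENNReal.ofReal (f (z ⬝ᵥ β)) := by
    apply Measurable.ennreal_ofReal
    apply hfmeas.comp
    simp_rw [dotProduct_comm]
    exact aux_measurable_dotProduct β
  have hPC : ((γ.withDensity (fun z => ENNReal.ofReal (f (z ⬝ᵥ β)))).map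
        (fun z => (W.mulVec z, (1:ℝ))) +
      (γ.withDensity (fun z => ENNReal.ofReal (1 - f (z ⬝ᵥ β)))).map
        (fun z => (W.mulVec z, (-1:ℝ)))) C
      ≤ ENNReal.ofReal (2 * ε * l2Norm a / (Real.sqrt (2 * Real.pi) * l2Norm β)) := by
    rw [Measure.add_apply, Measure.map_apply hmap1 hCm, Measure.map_apply hmap2 hCm,
      hpre1, hpre2, withDensity_apply _ hSm, withDensity_apply _ hSm,
      ← lintegral_add_left hm1]
    have hone : ∫⁻ z in S, (ENNReal.ofReal (f (z ⬝ᵥ β)) +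
        ENNReal.ofReal (1 - f (z ⬝ᵥ β))) ∂γ = ∫⁻ _ in S, 1 ∂γ := by
      apply lintegral_congr
      intro z
      rw [← ENNReal.ofReal_add (hf01 (z ⬝ᵥ β)).1 (by linarith [(hf01 (z ⬝ᵥ β)).2]),
        add_sub_cancel, ENNReal.ofReal_one]
    rw [hone, setLIntegral_one]
    have hγS : γ S = gaussianReal 0 v {t | |t - c₀| ≤ δ} := by
      rw [← aux_gauss_dot β, Measure.map_apply (aux_measurable_dotProduct β) hTm]
    rw [hγS]
    refine (aux_gauss_interval v hvne c₀ δ).trans (le_of_eq ?_)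
    congr 1
    have hcoe : ((v : ℝ≥0) : ℝ) = ∑ i, β i ^ 2 := rfl
    rw [Real.sqrt_mul (by positivity : (0:ℝ) ≤ 2 * Real.pi)]
    have hsqv : Real.sqrt (v : ℝ) = l2Norm β := by rw [hcoe]; rfl
    rw [hsqv, hδ]
    ring
  -- conclude
  rw [tsub_le_iff_right]
  calc (((γ.withDensity fun z => ENNReal.ofReal (f (z ⬝ᵥ β))).map
          (fun z => (W.mulVec z, (1:ℝ)))) +
        ((γ.withDensity fun z => ENNReal.ofReal (1 - f (z ⬝ᵥ β))).map
          (fun z => (W.mulVec z, (-1:ℝ))))) A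
      ≤ (((γ.withDensity fun z => ENNReal.ofReal (f (z ⬝ᵥ β))).map
          (fun z => (W.mulVec z, (1:ℝ)))) +
        ((γ.withDensity fun z => ENNReal.ofReal (1 - f (z ⬝ᵥ β))).map
          (fun z => (W.mulVec z, (-1:ℝ))))) (A ∩ B) +
        (((γ.withDensity fun z => ENNReal.ofReal (f (z ⬝ᵥ β))).map
          (fun z => (W.mulVec z, (1:ℝ)))) +
        ((γ.withDensity fun z => ENNReal.ofReal (1 - f (z ⬝ᵥ β))).map
          (fun z => (W.mulVec z, (-1:ℝ))))) (A \ B) :=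
        measure_le_inter_add_diff _ _ _
    _ ≤ _ := by
        refine (add_le_add (measure_mono Set.inter_subset_right)
          ((measure_mono hsub).trans hPC)).trans ?_
        rw [add_comm]
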